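/- arXiv:1203.0117 — 8 statements merged into one kernel-verified Lean document; each statement's English description precedes it below -/
import Mathlib

section
/- Weak duality for CSSL: let d, N ≥ 1, S₁, …, S_N symmetric positive semidefinite real d×d matrices, t₁, …, t_N > 0 with Σᵢ tᵢ = 1, ρ, γ > 0, and p ∈ (1, ∞) with conjugate exponent q = p/(p−1). For every primal-feasible pair (Θ, Ω) (i.e., Θ + Ωᵢ symmetric positive definite for all i) and every dual-feasible family (W₁, …, W_N) (i.e., each Wᵢ symmetric positive definite and for all j, j', |Σᵢ tᵢ(W_{i,jj'} − S_{i,jj'})| ≤ ρ and (Σᵢ tᵢ^q |W_{i,jj'} − S_{i,jj'}|^q)^{1/q} ≤ γ), one has g(Θ, Ω) ≤ −Σᵢ tᵢ log det Wᵢ − d. -/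
open Finset Matrix

noncomputable def matL1 {d : ℕ} (A : Matrix (Fin d) (Fin d) ℝ) : ℝ :=
  ∑ j, ∑ j', |A j j'|

noncomputable def matL1p {d N : ℕ} (p : ℝ) (Ω : Fin N → Matrix (Fin d) (Fin d) ℝ) : ℝ :=
  ∑ j : Fin d, ∑ j' : Fin d, (∑ i, |Ω i j j'| ^ p) ^ (1 / p)

/-- The CSSL objective `g(Θ, Ω)`. -/
noncomputable def cssl {d N : ℕ} (S : Fin N → Matrix (Fin d) (Fin d) ℝ) (t : Fin N → ℝ)
    (ρ γ p : ℝ) (Θ : Matrix (Fin d) (Fin d) ℝ) (Ω : Fin N → Matrix (Fin d) (Fin d) ℝ) : ℝ :=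
  ∑ i, t i * (Real.log (Θ + Ω i).det - Matrix.trace (S i * (Θ + Ω i)))
    - ρ * matL1 Θ - γ * matL1p p Ω

lemma trace_mul_expand {d : ℕ} (M X : Matrix (Fin d) (Fin d) ℝ) :
    (M * X).trace = ∑ j, ∑ k, M j k * X k j := by
  simp [Matrix.trace, Matrix.mul_apply, Matrix.diag]

lemma trace_eq_sum_eigs {d : ℕ} {M : Matrix (Fin d) (Fin d) ℝ} (hM : M.IsHermitian) :
    M.trace = ∑ k, hM.eigenvalues k := by
  simpa using hM.trace_eq_sum_eigenvalues

lemma logdet_le_trace {d : ℕ} {M : Matrix (Fin d) (Fin d) ℝ} (hM : M.PosSemidef)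
    (hdet : 0 < M.det) : Real.log M.det ≤ M.trace - d := by
  have hH := hM.isHermitian
  have hev : ∀ k, 0 ≤ hH.eigenvalues k := hM.eigenvalues_nonneg
  have hdet' : M.det = ∏ k, hH.eigenvalues k := by
    simpa using hH.det_eq_prod_eigenvalues
  have hpos : ∀ k, 0 < hH.eigenvalues k := by
    intro k
    rcases (hev k).lt_or_eq with h | h
    · exact h
    · exfalso
      rw [hdet', Finset.prod_eq_zero (Finset.mem_univ k) h.symm] at hdet
      exact lt_irrefl 0 hdet
  rw [hdet', Real.log_prod (fun k _ => (hpos k).ne'), trace_eq_sum_eigs hH]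
  calc ∑ k, Real.log (hH.eigenvalues k) ≤ ∑ k : Fin d, (hH.eigenvalues k - 1) :=
        Finset.sum_le_sum (fun k _ => Real.log_le_sub_one_of_pos (hpos k))
    _ = (∑ k, hH.eigenvalues k) - d := by
        rw [Finset.sum_sub_distrib]; simp

open scoped MatrixOrder in
lemma logdet_le_key {d : ℕ} {A W : Matrix (Fin d) (Fin d) ℝ} (hA : A.PosDef) (hW : W.PosDef) :
    Real.log A.det ≤ (W * A).trace - Real.log W.det - d := by
  set R := CFC.sqrt W with hRdef
  have hR : R.PosSemidef := (CFC.sqrt_nonneg W).posSemidef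
  have hRR : R * R = W := CFC.sqrt_mul_sqrt_self W hW.posSemidef.nonneg
  have hM : (R * A * R).PosSemidef := by
    have := hA.posSemidef.mul_mul_conjTranspose_same R
    rwa [show Rᴴ = R from hR.isHermitian] at this
  have hdetR : R.det * R.det = W.det := by rw [← Matrix.det_mul, hRR]
  have hdet : (R * A * R).det = W.det * A.det := by
    rw [Matrix.det_mul, Matrix.det_mul]
    linear_combination A.det * hdetR
  have htr : (R * A * R).trace = (W * A).trace := by
    rw [Matrix.trace_mul_cycle, hRR]
  have hdpos : 0 < (R * A * R).det := by
    rw [hdet]; exact mul_pos hW.det_pos hA.det_pos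
  have := logdet_le_trace hM hdpos
  rw [hdet, htr, Real.log_mul hW.det_pos.ne' hA.det_pos.ne'] at this
  linarith

/-- Weak duality for CSSL: every primal-feasible value is at most every dual-feasible
value. -/
theorem cssl_weak_duality (d N : ℕ) (hd : 1 ≤ d) (hN : 1 ≤ N)
    (S : Fin N → Matrix (Fin d) (Fin d) ℝ) (hS : ∀ i, (S i).PosSemidef)
    (t : Fin N → ℝ) (ht : ∀ i, 0 < t i) (htsum : ∑ i, t i = 1)
    (ρ γ : ℝ) (hρ : 0 < ρ) (hγ : 0 < γ)
    (p q : ℝ) (hp : 1 < p) (hq : q = p / (p - 1))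
    (Θ : Matrix (Fin d) (Fin d) ℝ) (Ω : Fin N → Matrix (Fin d) (Fin d) ℝ)
    (hprimal : ∀ i, (Θ + Ω i).PosDef)
    (W : Fin N → Matrix (Fin d) (Fin d) ℝ)
    (hWpd : ∀ i, (W i).PosDef)
    (hWρ : ∀ j j', |∑ i, t i * (W i j j' - S i j j')| ≤ ρ)
    (hWγ : ∀ j j', (∑ i, t i ^ q * |W i j j' - S i j j'| ^ q) ^ (1 / q) ≤ γ) :
    cssl S t ρ γ p Θ Ω ≤ (- ∑ i, t i * Real.log (W i).det) - d := by
  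
  have hqp : q.HolderConjugate p := by
    have h1 : p.HolderConjugate (p / (p - 1)) := Real.HolderConjugate.conjExponent hp
    rw [← hq] at h1
    exact h1.symm
  set D : Fin N → Matrix (Fin d) (Fin d) ℝ := fun i => W i - S i with hD
  -- per-index key inequality
  have key : ∀ i, Real.log (Θ + Ω i).det - (S i * (Θ + Ω i)).trace ≤
      - Real.log (W i).det - d + (D i * (Θ + Ω i)).trace := by
    intro i
    have h1 := logdet_le_key (hprimal i) (hWpd i)
    have h2 : (D i * (Θ + Ω i)).trace
        = (W i * (Θ + Ω i)).trace - (S i * (Θ + Ω i)).trace := by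
      rw [hD]
      rw [Matrix.sub_mul, Matrix.trace_sub]
    linarith
  have step2 : ∑ i, t i * (Real.log (Θ + Ω i).det - (S i * (Θ + Ω i)).trace)
      ≤ (- ∑ i, t i * Real.log (W i).det) - d + ∑ i, t i * (D i * (Θ + Ω i)).trace := by
    have h := Finset.sum_le_sum (fun i (_ : i ∈ Finset.univ) =>
      mul_le_mul_of_nonneg_left (key i) (ht i).le)
    have e : ∑ i, t i * (- Real.log (W i).det - d + (D i * (Θ + Ω i)).trace)
        = (- ∑ i, t i * Real.log (W i).det) - d + ∑ i, t i * (D i * (Θ + Ω i)).trace := by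
      rw [Finset.sum_congr rfl (fun i _ => by
        ring : ∀ i ∈ Finset.univ, t i * (- Real.log (W i).det - d + (D i * (Θ + Ω i)).trace)
          = -(t i * Real.log (W i).det) - t i * d + t i * (D i * (Θ + Ω i)).trace)]
      rw [Finset.sum_add_distrib, Finset.sum_sub_distrib, Finset.sum_neg_distrib,
        ← Finset.sum_mul, htsum, one_mul]
    rw [← e]
    exact h
  -- split the trace term
  have split : ∑ i, t i * (D i * (Θ + Ω i)).trace
      = ∑ i, t i * (D i * Θ).trace + ∑ i, t i * (D i * Ω i).trace := by
    rw [← Finset.sum_add_distrib]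
    refine Finset.sum_congr rfl fun i _ => ?_
    rw [Matrix.mul_add, Matrix.trace_add]
    ring
  -- bound the Θ part
  have bound1 : ∑ i, t i * (D i * Θ).trace ≤ ρ * matL1 Θ := by
    have expand : ∑ i, t i * (D i * Θ).trace
        = ∑ j, ∑ k, (∑ i, t i * D i j k) * Θ k j := by
      simp only [trace_mul_expand, Finset.mul_sum, Finset.sum_mul]
      rw [Finset.sum_comm]
      refine Finset.sum_congr rfl fun j _ => ?_
      rw [Finset.sum_comm]
      refine Finset.sum_congr rfl fun k _ => Finset.sum_congr rfl fun i _ => by ring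
    rw [expand]
    calc ∑ j, ∑ k, (∑ i, t i * D i j k) * Θ k j
        ≤ ∑ j, ∑ k, ρ * |Θ k j| := by
          refine Finset.sum_le_sum fun j _ => Finset.sum_le_sum fun k _ => ?_
          calc (∑ i, t i * D i j k) * Θ k j ≤ |(∑ i, t i * D i j k) * Θ k j| := le_abs_self _
            _ = |∑ i, t i * D i j k| * |Θ k j| := abs_mul _ _
            _ ≤ ρ * |Θ k j| := by
                refine mul_le_mul_of_nonneg_right ?_ (abs_nonneg _)
                simpa [hD] using hWρ j k
      _ = ρ * matL1 Θ := by
          rw [matL1, Finset.mul_sum, Finset.sum_comm]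
          exact Finset.sum_congr rfl fun j _ => by rw [Finset.mul_sum]
  -- bound the Ω part
  have bound2 : ∑ i, t i * (D i * Ω i).trace ≤ γ * matL1p p Ω := by
    have expand : ∑ i, t i * (D i * Ω i).trace
        = ∑ j, ∑ k, ∑ i, (t i * D i j k) * Ω i k j := by
      simp only [trace_mul_expand, Finset.mul_sum]
      rw [Finset.sum_comm]
      refine Finset.sum_congr rfl fun j _ => ?_
      rw [Finset.sum_comm]
      refine Finset.sum_congr rfl fun k _ => Finset.sum_congr rfl fun i _ => by ring
    rw [expand]
    calc ∑ j, ∑ k, ∑ i, (t i * D i j k) * Ω i k j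
        ≤ ∑ j, ∑ k, γ * (∑ i, |Ω i k j| ^ p) ^ (1 / p) := by
          refine Finset.sum_le_sum fun j _ => Finset.sum_le_sum fun k _ => ?_
          have hold := Real.inner_le_Lp_mul_Lq (s := Finset.univ)
            (fun i => t i * D i j k) (fun i => Ω i k j) hqp
          have habs : ∀ i : Fin N, |t i * D i j k| ^ q
              = t i ^ q * |W i j k - S i j k| ^ q := fun i => by
            rw [abs_mul, Real.mul_rpow (abs_nonneg _) (abs_nonneg _),
              abs_of_pos (ht i)]
            simp [hD, Matrix.sub_apply]
          rw [Finset.sum_congr rfl (fun i _ => habs i)] at hold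
          refine le_trans hold ?_
          refine mul_le_mul_of_nonneg_right (hWγ j k) ?_
          exact Real.rpow_nonneg (Finset.sum_nonneg fun i _ =>
            Real.rpow_nonneg (abs_nonneg _) _) _
      _ = γ * matL1p p Ω := by
          rw [matL1p, Finset.mul_sum, Finset.sum_comm]
          exact Finset.sum_congr rfl fun j _ => by rw [Finset.mul_sum]
  rw [cssl]
  linarith
end

section
/- Bivariate hyper-parameter condition: let N ≥ 1, t₁, …, t_N > 0 with Σᵢ tᵢ = 1, ρ, γ > 0, p ∈ [1, ∞), and let S₁, …, S_N be symmetric positive definite 2×2 matrices with Sᵢ = [[aᵢ, rᵢ],[rᵢ, bᵢ]]. Consider maximizing G(θ, u, v, ω) = Σ_{i=1}^N tᵢ (log det(Θ+Ωᵢ) − tr(Sᵢ(Θ+Ωᵢ))) − 2ρ|θ| − 2γ‖ω‖_p over θ ∈ ℝ, u, v, ω ∈ ℝ^N, where Θ = [[0, θ],[θ, 0]] and Ωᵢ = [[uᵢ, ωᵢ],[ωᵢ, vᵢ]], subject to Θ+Ωᵢ being positive definite for all i. If max_{1≤i≤N} |rᵢ| ≤ γ and |Σ_{i=1}^N tᵢ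 rᵢ| ≤ ρ, then every maximizer satisfies θ = 0 and ωᵢ = 0 for all i. -/
open Matrix

lemma posDef_fin_two {x y z : ℝ} (hx : 0 < x) (hd : 0 < x * z - y * y) :
    (!![x, y; y, z]).PosDef := by
  rw [Matrix.posDef_iff_dotProduct_mulVec]
  constructor
  · ext i j
    fin_cases i <;> fin_cases j <;>
      simp [Matrix.conjTranspose, Matrix.vecHead, Matrix.vecTail]
  · intro w hw
    have h2 : dotProduct (star w) ((!![x, y; y, z]) *ᵥ w) =
        x * w 0 * w 0 + 2 * y * (w 0 * w 1) + z * w 1 * w 1 := by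
      simp [Matrix.mulVec, dotProduct, Fin.sum_univ_two]; ring
    rw [h2]
    have hw01 : w 0 ≠ 0 ∨ w 1 ≠ 0 := by
      by_contra h; push_neg at h
      apply hw; ext i; fin_cases i <;> simp [h.1, h.2]
    by_cases h1 : w 1 = 0
    · have h0 : w 0 ≠ 0 := by
        rcases hw01 with h | h
        · exact h
        · exact absurd h1 h
      have := mul_pos hx (mul_self_pos.mpr h0)
      rw [h1]
      nlinarith [this]
    · nlinarith [sq_nonneg (x * w 0 + y * w 1), mul_pos hd (mul_self_pos.mpr h1), hx]

lemma posDef_entries {x y z : ℝ} (h : (!![x, y; y, z]).PosDef) :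
    0 < x ∧ 0 < z ∧ 0 < x * z - y * y := by
  have hd := h.det_pos
  rw [Matrix.det_fin_two_of] at hd
  have h0 := h.dotProduct_mulVec_pos (x := ![1, 0]) (by intro hc; simpa using congrFun hc 0)
  have h1 := h.dotProduct_mulVec_pos (x := ![0, 1]) (by intro hc; simpa using congrFun hc 1)
  simp [Matrix.mulVec, dotProduct, Fin.sum_univ_two] at h0 h1
  exact ⟨h0, h1, by nlinarith⟩

lemma add_fin_two (θ x y z : ℝ) :
    !![(0:ℝ), θ; θ, 0] + !![x, y; y, z] = !![x, θ + y; θ + y, z] := by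
  ext i j; fin_cases i <;> fin_cases j <;> simp

/-- The bivariate CSSL objective with regularization only on the off-diagonal entries. -/
noncomputable def bivarG {N : ℕ} (S : Fin N → Matrix (Fin 2) (Fin 2) ℝ) (t : Fin N → ℝ)
    (ρ γ p : ℝ) (θ : ℝ) (u v ω : Fin N → ℝ) : ℝ :=
  ∑ i, t i * (Real.log (!![(0 : ℝ), θ; θ, 0] + !![u i, ω i; ω i, v i]).det
      - Matrix.trace (S i * (!![(0 : ℝ), θ; θ, 0] + !![u i, ω i; ω i, v i])))
    - 2 * ρ * |θ| - 2 * γ * (∑ i, |ω i| ^ p) ^ (1 / p)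

lemma bivarG_eq {N : ℕ} (a b r : Fin N → ℝ) (S : Fin N → Matrix (Fin 2) (Fin 2) ℝ)
    (hSdef : ∀ i, S i = !![a i, r i; r i, b i]) (t : Fin N → ℝ) (ρ γ p θ : ℝ)
    (u v ω : Fin N → ℝ) :
    bivarG S t ρ γ p θ u v ω =
      ∑ i, t i * (Real.log (u i * v i - (θ + ω i) * (θ + ω i))
        - (a i * u i + b i * v i + 2 * r i * (θ + ω i)))
      - 2 * ρ * |θ| - 2 * γ * (∑ i, |ω i| ^ p) ^ (1 / p) := by
  unfold bivarG
  congr 1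
  congr 1
  apply Finset.sum_congr rfl
  intro i _
  rw [hSdef, add_fin_two]
  have hdet : (!![u i, θ + ω i; θ + ω i, v i]).det
      = u i * v i - (θ + ω i) * (θ + ω i) := by
    rw [Matrix.det_fin_two_of]
  have htr : (!![a i, r i; r i, b i] * !![u i, θ + ω i; θ + ω i, v i]).trace
      = a i * u i + b i * v i + 2 * r i * (θ + ω i) := by
    simp [Matrix.trace_fin_two, Matrix.mul_apply, Fin.sum_univ_two]
    ring
  rw [hdet, htr]

/-- Bivariate hyper-parameter condition: if `maxᵢ |rᵢ| ≤ γ` and `|∑ᵢ tᵢ rᵢ| ≤ ρ`, then every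
maximizer of the bivariate CSSL problem has zero off-diagonal entries: `θ = 0` and `ω = 0`. -/
theorem bivariate_hyperparameter_condition (N : ℕ) (hN : 1 ≤ N)
    (t : Fin N → ℝ) (ht : ∀ i, 0 < t i) (htsum : ∑ i, t i = 1)
    (ρ γ p : ℝ) (hρ : 0 < ρ) (hγ : 0 < γ) (hp : 1 ≤ p)
    (a b r : Fin N → ℝ) (S : Fin N → Matrix (Fin 2) (Fin 2) ℝ)
    (hSdef : ∀ i, S i = !![a i, r i; r i, b i]) (hSpd : ∀ i, (S i).PosDef)
    (hrγ : ∀ i, |r i| ≤ γ) (hrρ : |∑ i, t i * r i| ≤ ρ)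
    (θ : ℝ) (u v ω : Fin N → ℝ)
    (hfeas : ∀ i, (!![(0 : ℝ), θ; θ, 0] + !![u i, ω i; ω i, v i]).PosDef)
    (hmax : ∀ (θ' : ℝ) (u' v' ω' : Fin N → ℝ),
      (∀ i, (!![(0 : ℝ), θ'; θ', 0] + !![u' i, ω' i; ω' i, v' i]).PosDef) →
      bivarG S t ρ γ p θ' u' v' ω' ≤ bivarG S t ρ γ p θ u v ω) :
    θ = 0 ∧ ∀ i, ω i = 0 := by
  have hp0 : 0 < p := lt_of_lt_of_le one_pos hp
  -- entries positivity
  have hent : ∀ i, 0 < u i ∧ 0 < v i ∧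
      0 < u i * v i - (θ + ω i) * (θ + ω i) := by
    intro i
    have := hfeas i
    rw [add_fin_two] at this
    exact posDef_entries this
  have hu : ∀ i, 0 < u i := fun i => (hent i).1
  have hv : ∀ i, 0 < v i := fun i => (hent i).2.1
  have hd : ∀ i, 0 < u i * v i - (θ + ω i) * (θ + ω i) := fun i => (hent i).2.2
  have huv : ∀ i, 0 < u i * v i := fun i => by nlinarith [hd i, sq_nonneg (θ + ω i)]
  -- feasibility of the comparison point
  have hfeas0 : ∀ i, (!![(0 : ℝ), (0:ℝ); (0:ℝ), 0]
      + !![u i, (0:ℝ); (0:ℝ), v i]).PosDef := by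
    intro i
    rw [add_fin_two]
    simp only [add_zero]
    exact posDef_fin_two (hu i) (by nlinarith [huv i])
  have h1 := hmax 0 u v (fun _ => 0) hfeas0
  rw [bivarG_eq a b r S hSdef, bivarG_eq a b r S hSdef] at h1
  -- simplify the comparison value
  have hzero : (∑ i : Fin N, |(0:ℝ)| ^ p) ^ (1 / p) = 0 := by
    rw [Finset.sum_congr rfl (fun i _ => by
      rw [abs_zero, Real.zero_rpow hp0.ne'])]
    rw [Finset.sum_const, smul_zero, Real.zero_rpow]
    positivity
  rw [hzero] at h1
  simp only [abs_zero, add_zero, mul_zero, sub_zero] at h1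
  set W : ℝ := (∑ i, |ω i| ^ p) ^ (1 / p) with hWdef
  have hW0 : 0 ≤ W := by
    apply Real.rpow_nonneg
    apply Finset.sum_nonneg
    intro i _
    exact Real.rpow_nonneg (abs_nonneg _) p
  have hWi : ∀ i, |ω i| ≤ W := by
    intro i
    have hle : |ω i| ^ p ≤ ∑ j, |ω j| ^ p :=
      Finset.single_le_sum (fun j _ => Real.rpow_nonneg (abs_nonneg _) p)
        (Finset.mem_univ i)
    have : (|ω i| ^ p) ^ (1/p) ≤ W :=
      Real.rpow_le_rpow (Real.rpow_nonneg (abs_nonneg _) p) hle (by positivity)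
    rwa [← Real.rpow_mul (abs_nonneg _), mul_one_div_cancel hp0.ne',
      Real.rpow_one] at this
  have hsumtω : ∑ i, t i * |ω i| ≤ W := by
    calc ∑ i, t i * |ω i| ≤ ∑ i, t i * W :=
          Finset.sum_le_sum (fun i _ =>
            mul_le_mul_of_nonneg_left (hWi i) (ht i).le)
      _ = W := by rw [← Finset.sum_mul, htsum, one_mul]
  -- split the big sum
  have hsplit : ∑ i, t i * (Real.log (u i * v i - (θ + ω i) * (θ + ω i))
        - (a i * u i + b i * v i + 2 * r i * (θ + ω i)))
      = ∑ i, t i * (Real.log (u i * v i) - (a i * u i + b i * v i))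
        + ∑ i, t i * (Real.log (u i * v i - (θ + ω i) * (θ + ω i))
            - Real.log (u i * v i))
        - 2 * ∑ i, t i * r i * (θ + ω i) := by
    rw [Finset.mul_sum, ← Finset.sum_add_distrib, ← Finset.sum_sub_distrib]
    apply Finset.sum_congr rfl
    intro i _
    ring
  rw [hsplit] at h1
  have key : 0 ≤ ∑ i, t i * (Real.log (u i * v i - (θ + ω i) * (θ + ω i))
        - Real.log (u i * v i))
      - 2 * ∑ i, t i * r i * (θ + ω i) - 2 * ρ * |θ| - 2 * γ * W := by
    linarith
  -- bound on the linear term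
  have hlin : |∑ i, t i * r i * (θ + ω i)| ≤ ρ * |θ| + γ * W := by
    have hsp : ∑ i, t i * r i * (θ + ω i)
        = θ * (∑ i, t i * r i) + ∑ i, t i * r i * ω i := by
      rw [Finset.mul_sum, ← Finset.sum_add_distrib]
      apply Finset.sum_congr rfl
      intro i _
      ring
    calc |∑ i, t i * r i * (θ + ω i)|
        ≤ |θ * (∑ i, t i * r i)| + |∑ i, t i * r i * ω i| := by
          rw [hsp]; exact abs_add_le _ _
      _ ≤ ρ * |θ| + γ * W := by
          have e1 : |θ * (∑ i, t i * r i)| ≤ |θ| * ρ := by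
            rw [abs_mul]
            exact mul_le_mul_of_nonneg_left hrρ (abs_nonneg θ)
          have e2 : |∑ i, t i * r i * ω i| ≤ γ * W := by
            calc |∑ i, t i * r i * ω i| ≤ ∑ i, |t i * r i * ω i| :=
                  Finset.abs_sum_le_sum_abs _ _
              _ ≤ ∑ i, γ * (t i * |ω i|) := by
                  apply Finset.sum_le_sum
                  intro i _
                  rw [abs_mul, abs_mul, abs_of_pos (ht i)]
                  calc t i * |r i| * |ω i| ≤ t i * γ * |ω i| := by
                        apply mul_le_mul_of_nonneg_right _ (abs_nonneg _)
                        exact mul_le_mul_of_nonneg_left (hrγ i) (ht i).le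
                    _ = γ * (t i * |ω i|) := by ring
              _ = γ * ∑ i, t i * |ω i| := by rw [Finset.mul_sum]
              _ ≤ γ * W := mul_le_mul_of_nonneg_left hsumtω hγ.le
          linarith
  -- each log term is nonpositive
  have hL : ∀ i, t i * (Real.log (u i * v i - (θ + ω i) * (θ + ω i))
      - Real.log (u i * v i)) ≤ 0 := by
    intro i
    apply mul_nonpos_of_nonneg_of_nonpos (ht i).le
    have h6 : u i * v i - (θ + ω i) * (θ + ω i) ≤ u i * v i := by
      nlinarith [sq_nonneg (θ + ω i)]
    have := Real.log_le_log (hd i) h6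
    linarith
  have hLsum_nonneg : 0 ≤ ∑ i, t i * (Real.log (u i * v i
      - (θ + ω i) * (θ + ω i)) - Real.log (u i * v i)) := by
    have := abs_le.mp hlin
    linarith [this.1]
  have hLsum : ∑ i, t i * (Real.log (u i * v i - (θ + ω i) * (θ + ω i))
      - Real.log (u i * v i)) = 0 :=
    le_antisymm (Finset.sum_nonpos (fun i _ => hL i)) hLsum_nonneg
  have hLzero : ∀ i ∈ Finset.univ, t i * (Real.log (u i * v i
      - (θ + ω i) * (θ + ω i)) - Real.log (u i * v i)) = 0 :=
    (Finset.sum_eq_zero_iff_of_nonpos (fun i _ => hL i)).mp hLsum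
  have hs0 : ∀ i, θ + ω i = 0 := by
    intro i
    have h2 := hLzero i (Finset.mem_univ i)
    have h3 : Real.log (u i * v i - (θ + ω i) * (θ + ω i))
        = Real.log (u i * v i) := by
      rcases mul_eq_zero.mp h2 with h | h
      · exact absurd h (ht i).ne'
      · linarith [sub_eq_zero.mp h]
    have h4 : u i * v i - (θ + ω i) * (θ + ω i) = u i * v i := by
      have := congrArg Real.exp h3
      rwa [Real.exp_log (hd i), Real.exp_log (huv i)] at this
    have : (θ + ω i) * (θ + ω i) = 0 := by linarith
    exact mul_self_eq_zero.mp this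
  have hsum0 : ∑ i, t i * r i * (θ + ω i) = 0 :=
    Finset.sum_eq_zero (fun i _ => by rw [hs0 i, mul_zero])
  rw [hLsum, hsum0] at key
  have hθ : θ = 0 := by
    have h5 : |θ| ≤ 0 := by nlinarith [mul_nonneg hγ.le hW0, abs_nonneg θ]
    exact abs_eq_zero.mp (le_antisymm h5 (abs_nonneg θ))
  refine ⟨hθ, fun i => ?_⟩
  have := hs0 i
  rw [hθ] at this
  linarith
end

section
/- Projection onto the pair of hyperplanes |1ᵀy| = ρ: let N ≥ 1, y₀ ∈ ℝ^N with 1ᵀy₀ ≠ 0, and ρ ≥ 0. Then the point y = y₀ − ((1ᵀy₀ − ρ·sgn(1ᵀy₀))/N)·1_N satisfies |1ᵀy| = ρ and minimizes (1/2)‖y' − y₀‖₂² over all y' ∈ ℝ^N with |1ᵀy'| = ρ. -/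
/-- Projection onto the pair of hyperplanes `|1ᵀy| = ρ`: the point
`y = y₀ − ((1ᵀy₀ − ρ·sgn(1ᵀy₀))/N)·1_N` lies on the constraint set and minimizes the
squared Euclidean distance to `y₀` over it. -/
theorem projection_onto_hyperplane_pair (N : ℕ) (hN : 1 ≤ N) (y₀ : Fin N → ℝ)
    (ρ : ℝ) (hρ : 0 ≤ ρ) (hsum : ∑ i, y₀ i ≠ 0)
    (y : Fin N → ℝ)
    (hy : y = fun i => y₀ i - ((∑ j, y₀ j) - ρ * Real.sign (∑ j, y₀ j)) / N) :
    |∑ i, y i| = ρ ∧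
    ∀ y' : Fin N → ℝ, |∑ i, y' i| = ρ →
      (1 / 2) * ∑ i, (y i - y₀ i) ^ 2 ≤ (1 / 2) * ∑ i, (y' i - y₀ i) ^ 2 := by
  set s := ∑ i, y₀ i with hs
  have hNpos : (0:ℝ) < N := by exact_mod_cast hN
  have hsgn : Real.sign s = 1 ∨ Real.sign s = -1 := by
    rcases lt_or_gt_of_ne hsum with h | h
    · right; exact Real.sign_of_neg h
    · left; exact Real.sign_of_pos h
  have hsgn_abs : |Real.sign s| = 1 := by rcases hsgn with h | h <;> simp [h]
  have hsum_y : ∑ i, y i = ρ * Real.sign s := by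
    subst hy
    rw [Finset.sum_sub_distrib, Finset.sum_const, Finset.card_univ, Fintype.card_fin]
    rw [nsmul_eq_mul, ← hs]
    field_simp
    ring
  constructor
  · rw [hsum_y, abs_mul, hsgn_abs, mul_one, abs_of_nonneg hρ]
  · intro y' hy'
    have key : ∀ i, y i - y₀ i = -((s - ρ * Real.sign s) / N) := by
      intro i; rw [hy]; ring
    have hlhs : ∑ i, (y i - y₀ i) ^ 2 = (s - ρ * Real.sign s) ^ 2 / N := by
      simp only [key]
      rw [Finset.sum_const, Finset.card_univ, Fintype.card_fin, nsmul_eq_mul]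
      field_simp
    have hcs : (∑ i, (y' i - y₀ i)) ^ 2 ≤ N * ∑ i, (y' i - y₀ i) ^ 2 := by
      have := sq_sum_le_card_mul_sum_sq (s := (Finset.univ : Finset (Fin N)))
        (f := fun i => y' i - y₀ i)
      simpa using this
    have hdiff : ∑ i, (y' i - y₀ i) = (∑ i, y' i) - s := by
      rw [Finset.sum_sub_distrib]
    set t := ∑ i, y' i with ht
    have habs1 : |s - ρ * Real.sign s| = abs (|s| - ρ) := by
      rcases hsgn with h | h
      · rw [h, mul_one]
        rcases lt_or_gt_of_ne hsum with hneg | hpos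
        · exact absurd (Real.sign_of_neg hneg) (by rw [h]; norm_num)
        · rw [abs_of_pos hpos]
      · rw [h]
        rcases lt_or_gt_of_ne hsum with hneg | hpos
        · rw [abs_of_neg hneg]; rw [abs_sub_comm]; ring_nf
        · exact absurd (Real.sign_of_pos hpos) (by rw [h]; norm_num)
    have hle : (s - ρ * Real.sign s) ^ 2 ≤ (t - s) ^ 2 := by
      have h1 : |s - ρ * Real.sign s| ≤ |t - s| := by
        rw [habs1]
        calc abs (|s| - ρ) = abs (|s| - |t|) := by rw [hy']
        _ ≤ |s - t| := abs_abs_sub_abs_le_abs_sub s t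
        _ = |t - s| := abs_sub_comm s t
      calc (s - ρ * Real.sign s) ^ 2 = |s - ρ * Real.sign s| ^ 2 := (sq_abs _).symm
      _ ≤ |t - s| ^ 2 := by exact pow_le_pow_left₀ (abs_nonneg _) h1 2
      _ = (t - s) ^ 2 := sq_abs _
    have : (s - ρ * Real.sign s) ^ 2 / N ≤ ∑ i, (y' i - y₀ i) ^ 2 := by
      rw [div_le_iff₀ hNpos]
      calc (s - ρ * Real.sign s) ^ 2 ≤ (t - s) ^ 2 := hle
      _ = (∑ i, (y' i - y₀ i)) ^ 2 := by rw [hdiff]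
      _ ≤ N * ∑ i, (y' i - y₀ i) ^ 2 := hcs
      _ = (∑ i, (y' i - y₀ i) ^ 2) * N := mul_comm _ _
    rw [hlhs]
    linarith
end

section
/- Continuous quadratic knapsack solution by thresholding: let N ≥ 1, y₀ ∈ ℝ^N, γ > 0, and let ν ∈ ℝ satisfy Σ_{i=1}^N max(|y₀ᵢ| − ν, 0) = γ. Then the vector z with zᵢ = max(|y₀ᵢ| − ν, 0) minimizes Σ_{i=1}^N (1/2)(zᵢ' − |y₀ᵢ|)² over all z' ∈ ℝ^N with z' ≥ 0 (componentwise) and Σᵢ zᵢ' = γ. -/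
/-- Continuous quadratic knapsack solution by thresholding: if `ν` satisfies
`∑ᵢ max(|y₀ᵢ| − ν, 0) = γ`, then `zᵢ = max(|y₀ᵢ| − ν, 0)` minimizes
`∑ᵢ (1/2)(zᵢ' − |y₀ᵢ|)²` over `{z' : z' ≥ 0, ∑ᵢ zᵢ' = γ}`. -/
theorem knapsack_thresholding (N : ℕ) (hN : 1 ≤ N) (y₀ : Fin N → ℝ)
    (γ : ℝ) (hγ : 0 < γ) (ν : ℝ)
    (hν : ∑ i, max (|y₀ i| - ν) 0 = γ)
    (z : Fin N → ℝ) (hz : z = fun i => max (|y₀ i| - ν) 0) :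
    ∀ z' : Fin N → ℝ, (∀ i, 0 ≤ z' i) → (∑ i, z' i = γ) →
      ∑ i, (1 / 2) * (z i - |y₀ i|) ^ 2 ≤ ∑ i, (1 / 2) * (z' i - |y₀ i|) ^ 2 := by
  intro z' hz' hsum
  have hzsum : ∑ i, z i = γ := by rw [hz]; exact hν
  have key : ∀ i, (1/2)*(z i - |y₀ i|)^2 + (-ν) * (z' i - z i)
      ≤ (1/2)*(z' i - |y₀ i|)^2 := by
    intro i
    rcases le_or_gt ν (|y₀ i|) with h | h
    · have hzi : z i = |y₀ i| - ν := by
        rw [hz]; exact max_eq_left (by linarith)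
      rw [hzi]; nlinarith [sq_nonneg (z' i - (|y₀ i| - ν))]
    · have hzi : z i = 0 := by
        rw [hz]; exact max_eq_right (by linarith)
      have := hz' i
      rw [hzi]; nlinarith [sq_nonneg (z' i)]
  have hsle := Finset.sum_le_sum (fun i (_ : i ∈ Finset.univ) => key i)
  rw [Finset.sum_add_distrib] at hsle
  have hlin : ∑ i, (-ν) * (z' i - z i) = 0 := by
    rw [← Finset.mul_sum, Finset.sum_sub_distrib, hsum, hzsum]
    ring
  linarith
end

section
/- ℓ1-sphere projection via sign transfer: let N ≥ 1, y₀ ∈ ℝ^N, and 0 < γ < ‖y₀‖₁. If z* minimizes Σ_{i=1}^N (1/2)(zᵢ − |y₀ᵢ|)² over all z ∈ ℝ^N with z ≥ 0 (componentwise) and Σᵢ zᵢ = γ, then the vector y* with y*ᵢ = sgn(y₀ᵢ)·z*ᵢ minimizes (1/2)‖y − y₀‖₂² over all y ∈ ℝ^N with ‖y‖₁ = γ. -/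
/-- `ℓ₁`-sphere projection via sign transfer: if `z*` solves the continuous quadratic
knapsack problem with data `|y₀|` and budget `γ < ‖y₀‖₁`, then `y*ᵢ = sgn(y₀ᵢ)·z*ᵢ`
minimizes `(1/2)‖y − y₀‖₂²` over the `ℓ₁`-sphere `{y : ‖y‖₁ = γ}`. -/
theorem l1_sphere_projection_sign_transfer (N : ℕ) (hN : 1 ≤ N) (y₀ : Fin N → ℝ)
    (γ : ℝ) (hγ₀ : 0 < γ) (hγ₁ : γ < ∑ i, |y₀ i|)
    (zs : Fin N → ℝ)
    (hzfeas : (∀ i, 0 ≤ zs i) ∧ ∑ i, zs i = γ)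
    (hzmin : ∀ z : Fin N → ℝ, (∀ i, 0 ≤ z i) → (∑ i, z i = γ) →
      ∑ i, (1 / 2) * (zs i - |y₀ i|) ^ 2 ≤ ∑ i, (1 / 2) * (z i - |y₀ i|) ^ 2)
    (ys : Fin N → ℝ) (hys : ys = fun i => Real.sign (y₀ i) * zs i) :
    (∑ i, |ys i|) = γ ∧
    ∀ y : Fin N → ℝ, (∑ i, |y i|) = γ →
      (1 / 2) * ∑ i, (ys i - y₀ i) ^ 2 ≤ (1 / 2) * ∑ i, (y i - y₀ i) ^ 2 := by
  obtain ⟨hz0, hzsum⟩ := hzfeas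
  -- zs vanishes wherever y₀ vanishes
  have hzero : ∀ i, y₀ i = 0 → zs i = 0 := by
    intro i hi
    by_contra hne
    have hzi : 0 < zs i := lt_of_le_of_ne (hz0 i) (Ne.symm hne)
    obtain ⟨j, hj⟩ : ∃ j, zs j < |y₀ j| := by
      by_contra h
      push_neg at h
      have h1 : ∑ k, |y₀ k| ≤ ∑ k, zs k := Finset.sum_le_sum fun k _ => h k
      rw [hzsum] at h1
      linarith
    have hij : i ≠ j := by
      rintro rfl
      rw [hi, abs_zero] at hj
      linarith [hz0 i]
    set ε := min (zs i) (|y₀ j| - zs j) with hε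
    have hεpos : 0 < ε := lt_min hzi (by linarith)
    have hε1 : ε ≤ zs i := min_le_left _ _
    have hε2 : ε ≤ |y₀ j| - zs j := min_le_right _ _
    set z' : Fin N → ℝ :=
      fun k => zs k + (if k = j then ε else 0) - (if k = i then ε else 0) with hz'
    have hz'0 : ∀ k, 0 ≤ z' k := by
      intro k
      simp only [hz']
      by_cases hk : k = i
      · subst hk
        rw [if_neg hij, if_pos rfl]
        linarith
      · rw [if_neg hk]
        by_cases hk' : k = j
        · rw [if_pos hk']; linarith [hz0 k]
        · rw [if_neg hk']; linarith [hz0 k]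
    have hz'sum : ∑ k, z' k = γ := by
      simp only [hz']
      rw [Finset.sum_sub_distrib, Finset.sum_add_distrib]
      simp [Finset.sum_ite_eq', hzsum]
    have hle := hzmin z' hz'0 hz'sum
    have hsum : ∑ k, ((1/2) * (z' k - |y₀ k|)^2 - (1/2) * (zs k - |y₀ k|)^2)
        = ∑ k ∈ ({i, j} : Finset (Fin N)),
            ((1/2) * (z' k - |y₀ k|)^2 - (1/2) * (zs k - |y₀ k|)^2) := by
      refine (Finset.sum_subset (Finset.subset_univ _) ?_).symm
      intro k _ hk
      simp only [Finset.mem_insert, Finset.mem_singleton, not_or] at hk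
      have hzk : z' k = zs k := by simp [hz', hk.1, hk.2]
      rw [hzk]; ring
    have hdiff : ∑ k, (1/2) * (z' k - |y₀ k|)^2 - ∑ k, (1/2) * (zs k - |y₀ k|)^2 < 0 := by
      rw [← Finset.sum_sub_distrib, hsum, Finset.sum_pair hij]
      have hzi' : z' i = zs i - ε := by simp [hz', hij]
      have hzj' : z' j = zs j + ε := by simp [hz', hij.symm]
      rw [hzi', hzj', hi, abs_zero]
      nlinarith [hz0 i, abs_nonneg (y₀ j)]
    linarith
  -- |ys i| = zs i and the squared distances agree
  have habs : ∀ i, |ys i| = zs i := by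
    intro i
    rw [hys]
    rcases lt_trichotomy (y₀ i) 0 with h | h | h
    · simp [Real.sign_of_neg h, abs_of_nonneg (hz0 i)]
    · simp [h, hzero i h]
    · simp [Real.sign_of_pos h, abs_of_nonneg (hz0 i)]
  have hsq : ∀ i, (ys i - y₀ i) ^ 2 = (zs i - |y₀ i|) ^ 2 := by
    intro i
    rw [hys]
    rcases lt_trichotomy (y₀ i) 0 with h | h | h
    · simp only [Real.sign_of_neg h, abs_of_neg h]; ring
    · simp [h, hzero i h]
    · simp only [Real.sign_of_pos h, abs_of_pos h]; ring
  constructor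
  · rw [← hzsum]
    exact Finset.sum_congr rfl fun i _ => habs i
  · intro y hy
    have h1 : ∀ i, 0 ≤ |y i| := fun i => abs_nonneg _
    have h2 : ∑ i, |y i| = γ := hy
    have h3 := hzmin (fun i => |y i|) h1 h2
    have h4 : ∀ i, (1/2) * (|y i| - |y₀ i|) ^ 2 ≤ (1/2) * (y i - y₀ i) ^ 2 := by
      intro i
      have habs' : |(|y i| - |y₀ i|)| ≤ |y i - y₀ i| := abs_abs_sub_abs_le_abs_sub _ _
      have := pow_le_pow_left₀ (abs_nonneg _) habs' 2
      rw [sq_abs, sq_abs] at this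
      linarith
    have h5 : ∑ i, (1/2) * (|y i| - |y₀ i|) ^ 2 ≤ ∑ i, (1/2) * (y i - y₀ i) ^ 2 :=
      Finset.sum_le_sum fun i _ => h4 i
    have h6 : ∑ i, (1/2) * (ys i - y₀ i) ^ 2 = ∑ i, (1/2) * (zs i - |y₀ i|) ^ 2 :=
      Finset.sum_congr rfl fun i _ => by rw [hsq i]
    calc (1 / 2) * ∑ i, (ys i - y₀ i) ^ 2
        = ∑ i, (1/2) * (ys i - y₀ i) ^ 2 := by rw [Finset.mul_sum]
      _ ≤ ∑ i, (1/2) * (y i - y₀ i) ^ 2 := by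
          rw [h6]; exact le_trans h3 h5
      _ = (1 / 2) * ∑ i, (y i - y₀ i) ^ 2 := by rw [Finset.mul_sum]
end

section
/- CSSL reduces to MSICS when ρ ≥ N^{1/p} γ: let d, N ≥ 1, S₁, …, S_N symmetric positive semidefinite real d×d matrices, t₁, …, t_N > 0 with Σᵢ tᵢ = 1, p ∈ [1, ∞), γ ≥ 0, and ρ ≥ N^{1/p} γ. Then for every (Θ, Ω) with Θ+Ωᵢ symmetric positive definite for all i, shifting the common part into the individual parts does not decrease the objective: g(0_{d×d}, (Θ+Ω₁, …, Θ+Ω_N)) ≥ g(Θ, (Ω₁, …, Ω_N)). -/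
/-- CSSL reduces to MSICS when `ρ ≥ N^{1/p} γ`: moving the common part into the individual
parts does not decrease the CSSL objective. -/
theorem cssl_reduces_to_msics (d N : ℕ) (hd : 1 ≤ d) (hN : 1 ≤ N)
    (S : Fin N → Matrix (Fin d) (Fin d) ℝ) (hS : ∀ i, (S i).PosSemidef)
    (t : Fin N → ℝ) (ht : ∀ i, 0 < t i) (htsum : ∑ i, t i = 1)
    (p ρ γ : ℝ) (hp : 1 ≤ p) (hγ : 0 ≤ γ) (hργ : (N : ℝ) ^ (1 / p) * γ ≤ ρ)
    (Θ : Matrix (Fin d) (Fin d) ℝ) (Ω : Fin N → Matrix (Fin d) (Fin d) ℝ)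
    (hfeas : ∀ i, (Θ + Ω i).PosDef) :
    cssl S t ρ γ p Θ Ω ≤ cssl S t ρ γ p 0 (fun i => Θ + Ω i) := by
  have hp0 : 0 < p := lt_of_lt_of_le one_pos hp
  have key : γ * matL1p p (fun i => Θ + Ω i) ≤ ρ * matL1 Θ + γ * matL1p p Ω := by
    have hM : matL1p p (fun i => Θ + Ω i) ≤ (N : ℝ) ^ (1 / p) * matL1 Θ + matL1p p Ω := by
      unfold matL1p matL1
      rw [Finset.mul_sum, ← Finset.sum_add_distrib]
      refine Finset.sum_le_sum fun j _ => ?_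
      rw [Finset.mul_sum, ← Finset.sum_add_distrib]
      refine Finset.sum_le_sum fun j' _ => ?_
      have h1 : (∑ i, |(Θ + Ω i) j j'| ^ p) ^ (1 / p) ≤
          (∑ i : Fin N, |Θ j j'| ^ p) ^ (1 / p) + (∑ i, |(Ω i) j j'| ^ p) ^ (1 / p) := by
        have := Real.Lp_add_le (f := fun _ : Fin N => Θ j j') (g := fun i => Ω i j j')
          (s := Finset.univ) hp
        simpa using this
      have h2 : (∑ i : Fin N, |Θ j j'| ^ p) ^ (1 / p) = (N : ℝ) ^ (1 / p) * |Θ j j'| := by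
        rw [Finset.sum_const, Finset.card_univ, Fintype.card_fin, nsmul_eq_mul,
          Real.mul_rpow (by positivity) (by positivity), ← Real.rpow_mul (abs_nonneg _),
          mul_one_div, div_self hp0.ne', Real.rpow_one]
      calc (∑ i, |(Θ + Ω i) j j'| ^ p) ^ (1 / p) ≤ _ := h1
        _ = (N : ℝ) ^ (1 / p) * |Θ j j'| + (∑ i, |(Ω i) j j'| ^ p) ^ (1 / p) := by rw [h2]
    have hΘ : 0 ≤ matL1 Θ := Finset.sum_nonneg fun j _ =>
      Finset.sum_nonneg fun j' _ => abs_nonneg _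
    calc γ * matL1p p (fun i => Θ + Ω i)
        ≤ γ * ((N : ℝ) ^ (1 / p) * matL1 Θ + matL1p p Ω) := by
          exact mul_le_mul_of_nonneg_left hM hγ
      _ = γ * (N : ℝ) ^ (1 / p) * matL1 Θ + γ * matL1p p Ω := by ring
      _ ≤ ρ * matL1 Θ + γ * matL1p p Ω := by
          have : γ * (N : ℝ) ^ (1 / p) ≤ ρ := by linarith [hργ]
          exact add_le_add_left (mul_le_mul_of_nonneg_right this hΘ) _
  have hL10 : matL1 (0 : Matrix (Fin d) (Fin d) ℝ) = 0 := by simp [matL1]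
  unfold cssl
  simp only [zero_add, hL10, mul_zero, sub_zero]
  linarith [key]
end

section
/- Positive definiteness of the coupled block matrix: let d₁, d₂, b ≥ 1, let Ψ₁ = V₁ D₁ V₁ᵀ and Ψ₂ = V₂ D₂ V₂ᵀ where V₁ ∈ ℝ^{d₁×d₁}, V₂ ∈ ℝ^{d₂×d₂} are orthogonal matrices and D₁ = diag(σ_{1,1}, …, σ_{1,d₁}), D₂ = diag(σ_{2,1}, …, σ_{2,d₂}) have strictly positive diagonal entries. Let π₁ : {1,…,b} → {1,…,d₁} and π₂ : {1,…,b} → {1,…,d₂} be injective, let ξ ∈ ℝ^b satisfy ξₘ² < σ_{1,π₁(m)} σ_{2,π₂(m)} for all m, and set Φ = Σ_{m=1}^b ξₘ v_{1,π₁(m)} v_{2,π₂(m)}ᵀ, where v_{k,j} denotes the j-th column of V_k. Then the (d₁+d₂)×(d₁+d₂) block matrix Λ = [[Ψ₁, Φ],[Φᵀ, Ψ₂]] is symmetric positive definite. -/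
open Matrix

private lemma quad_nonneg (σa σb c a b : ℝ) (hσa : 0 < σa) (hσb : 0 < σb)
    (hc : c ^ 2 < σa * σb) : 0 ≤ σa * a ^ 2 + 2 * (c * (a * b)) + σb * b ^ 2 := by
  nlinarith [sq_nonneg (σb * b + c * a), sq_nonneg a, mul_pos hσa hσb]

private lemma quad_pos (σa σb c a b : ℝ) (hσa : 0 < σa) (hσb : 0 < σb)
    (hc : c ^ 2 < σa * σb) (h : a ≠ 0 ∨ b ≠ 0) :
    0 < σa * a ^ 2 + 2 * (c * (a * b)) + σb * b ^ 2 := by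
  rcases eq_or_ne a 0 with rfl | ha
  · rcases h with h | h
    · exact absurd rfl h
    · nlinarith [pow_pos (abs_pos.mpr h) 2, sq_abs b]
  · have h2 : 0 < σb * (σa * a ^ 2 + 2 * (c * (a * b)) + σb * b ^ 2) := by
      nlinarith [sq_nonneg (σb * b + c * a), pow_pos (abs_pos.mpr ha) 2, sq_abs a]
    nlinarith [h2]

private lemma cross_eq {d₁ d₂ b : ℕ} (V₁ : Matrix (Fin d₁) (Fin d₁) ℝ)
    (V₂ : Matrix (Fin d₂) (Fin d₂) ℝ)
    (π₁ : Fin b → Fin d₁) (π₂ : Fin b → Fin d₂) (ξ : Fin b → ℝ)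
    (x₁ : Fin d₁ → ℝ) (x₂ : Fin d₂ → ℝ) :
    x₁ ⬝ᵥ ((Matrix.of fun j j' => ∑ m, ξ m * V₁ j (π₁ m) * V₂ j' (π₂ m)) *ᵥ x₂)
      = ∑ m, ξ m * ((V₁ᵀ *ᵥ x₁) (π₁ m) * ((V₂ᵀ *ᵥ x₂) (π₂ m))) := by
  simp only [dotProduct, mulVec, of_apply, transpose_apply, Finset.sum_mul, Finset.mul_sum]
  rw [Finset.sum_congr rfl fun j (_ : j ∈ Finset.univ) => Finset.sum_comm, Finset.sum_comm]
  refine Finset.sum_congr rfl fun m _ => ?_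
  rw [Finset.sum_comm]
  exact Finset.sum_congr rfl fun j' _ => Finset.sum_congr rfl fun j _ => by ring

private lemma diag_quad {n : ℕ} (σ : Fin n → ℝ) (u : Fin n → ℝ) :
    u ⬝ᵥ (Matrix.diagonal σ *ᵥ u) = ∑ j, σ j * u j ^ 2 := by
  simp only [dotProduct, mulVec_diagonal]
  exact Finset.sum_congr rfl fun j _ => by ring

/-- Positive definiteness of the coupled block matrix used to generate synthetic precision
matrices with a common substructure: if `Ψ₁ = V₁D₁V₁ᵀ`, `Ψ₂ = V₂D₂V₂ᵀ` with `V₁, V₂`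
orthogonal and positive diagonal `D₁, D₂`, and `Φ = ∑ₘ ξₘ v_{1,π₁(m)} v_{2,π₂(m)}ᵀ`
with injective index maps and `ξₘ² < σ_{1,π₁(m)} σ_{2,π₂(m)}`, then the block matrix
`[[Ψ₁, Φ], [Φᵀ, Ψ₂]]` is symmetric positive definite. -/
theorem coupled_block_posDef (d₁ d₂ b : ℕ) (hd₁ : 1 ≤ d₁) (hd₂ : 1 ≤ d₂) (hb : 1 ≤ b)
    (V₁ : Matrix (Fin d₁) (Fin d₁) ℝ) (V₂ : Matrix (Fin d₂) (Fin d₂) ℝ)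
    (hV₁ : V₁ᵀ * V₁ = 1 ∧ V₁ * V₁ᵀ = 1) (hV₂ : V₂ᵀ * V₂ = 1 ∧ V₂ * V₂ᵀ = 1)
    (σ₁ : Fin d₁ → ℝ) (σ₂ : Fin d₂ → ℝ)
    (hσ₁ : ∀ j, 0 < σ₁ j) (hσ₂ : ∀ j, 0 < σ₂ j)
    (Ψ₁ : Matrix (Fin d₁) (Fin d₁) ℝ) (hΨ₁ : Ψ₁ = V₁ * Matrix.diagonal σ₁ * V₁ᵀ)
    (Ψ₂ : Matrix (Fin d₂) (Fin d₂) ℝ) (hΨ₂ : Ψ₂ = V₂ * Matrix.diagonal σ₂ * V₂ᵀ)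
    (π₁ : Fin b → Fin d₁) (π₂ : Fin b → Fin d₂)
    (hπ₁ : Function.Injective π₁) (hπ₂ : Function.Injective π₂)
    (ξ : Fin b → ℝ) (hξ : ∀ m, ξ m ^ 2 < σ₁ (π₁ m) * σ₂ (π₂ m))
    (Φ : Matrix (Fin d₁) (Fin d₂) ℝ)
    (hΦ : Φ = Matrix.of fun j j' => ∑ m, ξ m * V₁ j (π₁ m) * V₂ j' (π₂ m)) :
    (Matrix.fromBlocks Ψ₁ Φ Φᵀ Ψ₂).PosDef := by
  subst hΨ₁ hΨ₂ hΦ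
  set Φ : Matrix (Fin d₁) (Fin d₂) ℝ :=
    Matrix.of fun j j' => ∑ m, ξ m * V₁ j (π₁ m) * V₂ j' (π₂ m) with hΦ
  rw [Matrix.posDef_iff_dotProduct_mulVec]
  constructor
  · refine Matrix.isHermitian_fromBlocks_iff.mpr ⟨?_, ?_, ?_, ?_⟩
    · show _ᴴ = _
      simp [conjTranspose_mul, Matrix.mul_assoc, diagonal_conjTranspose]
    · show Φᴴ = Φᵀ
      ext i j; simp
    · show (Φᵀ)ᴴ = Φ
      ext i j; simp
    · show _ᴴ = _
      simp [conjTranspose_mul, Matrix.mul_assoc, diagonal_conjTranspose]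
  · intro x hx
    set x₁ : Fin d₁ → ℝ := x ∘ Sum.inl with hx₁
    set x₂ : Fin d₂ → ℝ := x ∘ Sum.inr with hx₂
    set u : Fin d₁ → ℝ := V₁ᵀ *ᵥ x₁ with hu
    set w : Fin d₂ → ℝ := V₂ᵀ *ᵥ x₂ with hw
    -- step 1: expand the quadratic form
    have expand : (star x) ⬝ᵥ (Matrix.fromBlocks (V₁ * Matrix.diagonal σ₁ * V₁ᵀ) Φ Φᵀ
          (V₂ * Matrix.diagonal σ₂ * V₂ᵀ) *ᵥ x)
        = x₁ ⬝ᵥ ((V₁ * Matrix.diagonal σ₁ * V₁ᵀ) *ᵥ x₁) + x₁ ⬝ᵥ (Φ *ᵥ x₂)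
          + (x₂ ⬝ᵥ (Φᵀ *ᵥ x₁) + x₂ ⬝ᵥ ((V₂ * Matrix.diagonal σ₂ * V₂ᵀ) *ᵥ x₂)) := by
      rw [Matrix.fromBlocks_mulVec, show star x = x from star_trivial x]
      simp only [dotProduct, Fintype.sum_sum_type, Sum.elim_inl, Sum.elim_inr, Pi.add_apply,
        mul_add, Finset.sum_add_distrib]
      rfl
    have eΨ₁ : x₁ ⬝ᵥ ((V₁ * Matrix.diagonal σ₁ * V₁ᵀ) *ᵥ x₁) = ∑ j, σ₁ j * u j ^ 2 := by
      rw [Matrix.mul_assoc, ← Matrix.mulVec_mulVec, ← Matrix.mulVec_mulVec,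
        Matrix.dotProduct_mulVec, ← Matrix.mulVec_transpose, ← hu, diag_quad]
    have eΨ₂ : x₂ ⬝ᵥ ((V₂ * Matrix.diagonal σ₂ * V₂ᵀ) *ᵥ x₂) = ∑ j, σ₂ j * w j ^ 2 := by
      rw [Matrix.mul_assoc, ← Matrix.mulVec_mulVec, ← Matrix.mulVec_mulVec,
        Matrix.dotProduct_mulVec, ← Matrix.mulVec_transpose, ← hw, diag_quad]
    have eΦ : x₁ ⬝ᵥ (Φ *ᵥ x₂) = ∑ m, ξ m * (u (π₁ m) * w (π₂ m)) := by
      rw [hΦ, cross_eq, ← hu, ← hw]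
    have eΦT : x₂ ⬝ᵥ (Φᵀ *ᵥ x₁) = ∑ m, ξ m * (u (π₁ m) * w (π₂ m)) := by
      rw [Matrix.dotProduct_mulVec, Matrix.vecMul_transpose, dotProduct_comm, eΦ]
    -- step 2: nonvanishing of (u, w)
    have huw : u ≠ 0 ∨ w ≠ 0 := by
      by_contra h
      push_neg at h
      apply hx
      have h1 : x₁ = 0 := by
        have : V₁ *ᵥ (V₁ᵀ *ᵥ x₁) = x₁ := by
          rw [Matrix.mulVec_mulVec, hV₁.2, Matrix.one_mulVec]
        rw [← this, ← hu, h.1, Matrix.mulVec_zero]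
      have h2 : x₂ = 0 := by
        have : V₂ *ᵥ (V₂ᵀ *ᵥ x₂) = x₂ := by
          rw [Matrix.mulVec_mulVec, hV₂.2, Matrix.one_mulVec]
        rw [← this, ← hw, h.2, Matrix.mulVec_zero]
      funext i
      cases i with
      | inl a => exact congrFun h1 a
      | inr a => exact congrFun h2 a
    -- step 3: regroup the sum
    set S₁ : Finset (Fin d₁) := Finset.univ.image π₁ with hS₁
    set S₂ : Finset (Fin d₂) := Finset.univ.image π₂ with hS₂
    set q : Fin b → ℝ := fun m =>
      σ₁ (π₁ m) * u (π₁ m) ^ 2 + 2 * (ξ m * (u (π₁ m) * w (π₂ m))) + σ₂ (π₂ m) * w (π₂ m) ^ 2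
      with hq
    have split₁ : ∑ j, σ₁ j * u j ^ 2
        = (∑ m, σ₁ (π₁ m) * u (π₁ m) ^ 2) + ∑ j ∈ S₁ᶜ, σ₁ j * u j ^ 2 := by
      rw [← Finset.sum_add_sum_compl S₁ (fun j => σ₁ j * u j ^ 2), hS₁,
        Finset.sum_image (fun a _ c _ h => hπ₁ h)]
    have split₂ : ∑ j, σ₂ j * w j ^ 2
        = (∑ m, σ₂ (π₂ m) * w (π₂ m) ^ 2) + ∑ j ∈ S₂ᶜ, σ₂ j * w j ^ 2 := by
      rw [← Finset.sum_add_sum_compl S₂ (fun j => σ₂ j * w j ^ 2), hS₂,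
        Finset.sum_image (fun a _ c _ h => hπ₂ h)]
    have sumq : ∑ m, q m = (∑ m, σ₁ (π₁ m) * u (π₁ m) ^ 2)
        + 2 * (∑ m, ξ m * (u (π₁ m) * w (π₂ m))) + ∑ m, σ₂ (π₂ m) * w (π₂ m) ^ 2 := by
      rw [hq, Finset.mul_sum, ← Finset.sum_add_distrib, ← Finset.sum_add_distrib]
    rw [expand, eΨ₁, eΨ₂, eΦ, eΦT]
    have total : (∑ j, σ₁ j * u j ^ 2) + (∑ m, ξ m * (u (π₁ m) * w (π₂ m)))
        + ((∑ m, ξ m * (u (π₁ m) * w (π₂ m))) + ∑ j, σ₂ j * w j ^ 2)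
        = (∑ m, q m) + ((∑ j ∈ S₁ᶜ, σ₁ j * u j ^ 2) + ∑ j ∈ S₂ᶜ, σ₂ j * w j ^ 2) := by
      rw [split₁, split₂, sumq]; ring
    rw [total]
    -- step 4: positivity
    have hqnn : ∀ m, 0 ≤ q m := fun m =>
      quad_nonneg _ _ _ _ _ (hσ₁ _) (hσ₂ _) (hξ m)
    have hC₁ : (0:ℝ) ≤ ∑ j ∈ S₁ᶜ, σ₁ j * u j ^ 2 :=
      Finset.sum_nonneg fun j _ => mul_nonneg (hσ₁ j).le (sq_nonneg _)
    have hC₂ : (0:ℝ) ≤ ∑ j ∈ S₂ᶜ, σ₂ j * w j ^ 2 :=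
      Finset.sum_nonneg fun j _ => mul_nonneg (hσ₂ j).le (sq_nonneg _)
    have hqs : (0:ℝ) ≤ ∑ m, q m := Finset.sum_nonneg fun m _ => hqnn m
    rcases huw with h0 | h0
    · obtain ⟨j, hj⟩ := Function.ne_iff.mp h0
      by_cases hjS : j ∈ S₁
      · obtain ⟨m, _, hm⟩ := Finset.mem_image.mp hjS
        have : 0 < ∑ m, q m := by
          refine Finset.sum_pos' (fun m _ => hqnn m) ⟨m, Finset.mem_univ m, ?_⟩
          exact quad_pos _ _ _ _ _ (hσ₁ _) (hσ₂ _) (hξ m) (Or.inl (hm ▸ hj))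
        linarith
      · have : 0 < ∑ j ∈ S₁ᶜ, σ₁ j * u j ^ 2 := by
          refine Finset.sum_pos' (fun j _ => mul_nonneg (hσ₁ j).le (sq_nonneg _))
            ⟨j, Finset.mem_compl.mpr hjS, ?_⟩
          exact mul_pos (hσ₁ j) ((pow_pos (abs_pos.mpr hj) 2).trans_eq (sq_abs (u j)))
        linarith
    · obtain ⟨j, hj⟩ := Function.ne_iff.mp h0
      by_cases hjS : j ∈ S₂
      · obtain ⟨m, _, hm⟩ := Finset.mem_image.mp hjS
        have : 0 < ∑ m, q m := by
          refine Finset.sum_pos' (fun m _ => hqnn m) ⟨m, Finset.mem_univ m, ?_⟩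
          exact quad_pos _ _ _ _ _ (hσ₁ _) (hσ₂ _) (hξ m) (Or.inr (hm ▸ hj))
        linarith
      · have : 0 < ∑ j ∈ S₂ᶜ, σ₂ j * w j ^ 2 := by
          refine Finset.sum_pos' (fun j _ => mul_nonneg (hσ₂ j).le (sq_nonneg _))
            ⟨j, Finset.mem_compl.mpr hjS, ?_⟩
          exact mul_pos (hσ₂ j) ((pow_pos (abs_pos.mpr hj) 2).trans_eq (sq_abs (w j)))
        linarith
end

section
/- Spectral solution of the DAL-ADMM W-update equation: let d ≥ 1, c > 0, and let M be a real symmetric d×d matrix with eigendecomposition M = P D Pᵀ, P orthogonal and D = diag(σ₁, …, σ_d). Define W = P D̃ Pᵀ where D̃ = diag(σ̃₁, …, σ̃_d) and σ̃ₘ = (σₘ + √(σₘ² + 4c))/2. Then W is symmetric positive definite, invertible, and satisfies W − c·W⁻¹ = M. -/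
open Matrix

/-- Spectral solution of the DAL-ADMM `W`-update equation: if `M = P D Pᵀ` is a symmetric
eigendecomposition, then `W = P D̃ Pᵀ` with `σ̃ₘ = (σₘ + √(σₘ² + 4c))/2` is symmetric
positive definite, invertible, and solves `W − c·W⁻¹ = M`. -/
theorem dal_admm_W_update (d : ℕ) (hd : 1 ≤ d) (c : ℝ) (hc : 0 < c)
    (M : Matrix (Fin d) (Fin d) ℝ) (hM : M.IsSymm)
    (P : Matrix (Fin d) (Fin d) ℝ) (hP : Pᵀ * P = 1 ∧ P * Pᵀ = 1)
    (σ : Fin d → ℝ) (hdecomp : M = P * Matrix.diagonal σ * Pᵀ)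
    (W : Matrix (Fin d) (Fin d) ℝ)
    (hW : W = P * Matrix.diagonal (fun m => (σ m + Real.sqrt (σ m ^ 2 + 4 * c)) / 2) * Pᵀ) :
    W.PosDef ∧ IsUnit W ∧ W - c • W⁻¹ = M := by
  obtain ⟨hPtP, hPPt⟩ := hP
  set σ' : Fin d → ℝ := fun m => (σ m + Real.sqrt (σ m ^ 2 + 4 * c)) / 2 with hσ'
  -- positivity of the modified eigenvalues
  have hpos : ∀ m, 0 < σ' m := by
    intro m
    have hs : Real.sqrt (σ m ^ 2 + 4 * c) ^ 2 = σ m ^ 2 + 4 * c :=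
      Real.sq_sqrt (by positivity)
    have hs0 : 0 ≤ Real.sqrt (σ m ^ 2 + 4 * c) := Real.sqrt_nonneg _
    simp only [hσ']
    nlinarith [hs, hs0]
  have hne : ∀ m, σ' m ≠ 0 := fun m => (hpos m).ne'
  -- the diagonal matrix of modified eigenvalues is positive definite
  have hDpos : (Matrix.diagonal σ').PosDef := Matrix.PosDef.diagonal hpos
  -- W is positive definite
  have hWpd : W.PosDef := by
    rw [Matrix.posDef_iff_dotProduct_mulVec]
    constructor
    · rw [hW]
      show (P * Matrix.diagonal σ' * Pᵀ)ᴴ = _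
      simp [Matrix.conjTranspose_mul, Matrix.mul_assoc,
        Matrix.conjTranspose_eq_transpose_of_trivial, Matrix.diagonal_transpose]
    · intro x hx
      have hy : Pᵀ *ᵥ x ≠ 0 := by
        intro h
        apply hx
        have : P *ᵥ (Pᵀ *ᵥ x) = x := by
          rw [Matrix.mulVec_mulVec, hPPt, Matrix.one_mulVec]
        rw [h, Matrix.mulVec_zero] at this
        exact this.symm
      have := (Matrix.posDef_iff_dotProduct_mulVec.mp hDpos).2 hy
      rw [hW]
      have key : star x ⬝ᵥ (P * Matrix.diagonal σ' * Pᵀ) *ᵥ x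
          = star (Pᵀ *ᵥ x) ⬝ᵥ Matrix.diagonal σ' *ᵥ (Pᵀ *ᵥ x) := by
        rw [← Matrix.mulVec_mulVec, ← Matrix.mulVec_mulVec,
          Matrix.dotProduct_mulVec]
        congr 1
        show Matrix.vecMul (star x) P = star (Pᵀ *ᵥ x)
        rw [← Matrix.mulVec_transpose]
        simp [star]
      rw [key]
      exact this
  refine ⟨hWpd, hWpd.isUnit, ?_⟩
  -- compute the inverse
  have hWinv : W⁻¹ = P * Matrix.diagonal (fun m => (σ' m)⁻¹) * Pᵀ := by
    apply Matrix.inv_eq_right_inv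
    rw [hW]
    calc P * Matrix.diagonal σ' * Pᵀ * (P * Matrix.diagonal (fun m => (σ' m)⁻¹) * Pᵀ)
        = P * Matrix.diagonal σ' * (Pᵀ * P) * Matrix.diagonal (fun m => (σ' m)⁻¹) * Pᵀ := by
          simp only [Matrix.mul_assoc]
      _ = P * (Matrix.diagonal σ' * Matrix.diagonal (fun m => (σ' m)⁻¹)) * Pᵀ := by
          rw [hPtP, Matrix.mul_one]; simp only [Matrix.mul_assoc]
      _ = 1 := by
          rw [Matrix.diagonal_mul_diagonal]
          have h1 : (fun m => σ' m * (σ' m)⁻¹) = fun _ => (1 : ℝ) := by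
            funext m; exact mul_inv_cancel₀ (hne m)
          rw [h1, Matrix.diagonal_one, Matrix.mul_one, hPPt]
  rw [hWinv, hW, hdecomp]
  have hsm : c • ((P * Matrix.diagonal fun m => (σ' m)⁻¹) * Pᵀ)
      = P * Matrix.diagonal (c • fun m => (σ' m)⁻¹) * Pᵀ := by
    rw [Matrix.diagonal_smul, Matrix.mul_smul, Matrix.smul_mul]
  have hdd : (fun i => σ' i - (c • fun m => (σ' m)⁻¹) i) = σ := by
    funext m
    simp only [Pi.sub_apply, Pi.smul_apply, smul_eq_mul]
    have hs : Real.sqrt (σ m ^ 2 + 4 * c) ^ 2 = σ m ^ 2 + 4 * c :=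
      Real.sq_sqrt (by positivity)
    have key : σ' m * σ' m = σ m * σ' m + c := by
      simp only [hσ']
      linear_combination hs / 4
    have h1 := hne m
    field_simp
    linear_combination key
  rw [hsm, ← Matrix.sub_mul, ← Matrix.mul_sub, Matrix.diagonal_sub, hdd]
end
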